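/- Let 𝒜₀ be the p×p Jacobi matrix with diagonal a₀,…,a_{p−1} and off-diagonal b₀,…,b_{p−2}, let δ₀ be the first standard basis vector of ℂ^p, and let z ∈ ℂ with e_p(z) ≠ 0. Then (𝒜₀ − zI)^{−1}(√s₀·δ₀) = (0, d₁(z), …, d_{p−1}(z))ᵀ − (d_p(z)/e_p(z))·(e₀(z), e₁(z), …, e_{p−1}(z))ᵀ. In particular, a₀₀(z) := s₀ times the (0,0) entry of (𝒜₀ − zI)^{−1} equals −d_p(z)/e_p(z). -/

import Mathlib

open Matrix

noncomputable section

/-- The `p×p` Jacobi matrix with diagonal entries `a₀,…,a_{p-1}` and sub- and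
superdiagonal entries `b₀,…,b_{p-2}`. -/
def jacobiMatrix (p : ℕ) (a b : ℕ → ℝ) : Matrix (Fin p) (Fin p) ℝ :=
  Matrix.of fun i j =>
    if (i : ℕ) = (j : ℕ) then a (i : ℕ)
    else if (i : ℕ) + 1 = (j : ℕ) then b (i : ℕ)
    else if (j : ℕ) + 1 = (i : ℕ) then b (j : ℕ)
    else 0

lemma tri_mulVec (p : ℕ) (a b : ℕ → ℝ) (z : ℂ) (v : ℕ → ℂ) (i : Fin p) :
    ((((jacobiMatrix p a b).map Complex.ofReal) - z • (1 : Matrix (Fin p) (Fin p) ℂ)).mulVec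
      (fun j : Fin p => v (j : ℕ))) i =
    (if 0 < (i:ℕ) then (b ((i:ℕ)-1) : ℂ) * v ((i:ℕ)-1) else 0) + ((a (i:ℕ) : ℂ) - z) * v (i:ℕ) +
    (if (i:ℕ) + 1 < p then (b (i:ℕ) : ℂ) * v ((i:ℕ)+1) else 0) := by
  have hi : (i:ℕ) < p := i.isLt
  have hsum : ((((jacobiMatrix p a b).map Complex.ofReal) - z • (1 : Matrix (Fin p) (Fin p) ℂ)).mulVec
      (fun j : Fin p => v (j : ℕ))) i =
      ∑ j : Fin p, ((if (j:ℕ) + 1 = (i:ℕ) then (b ((i:ℕ)-1) : ℂ) else 0) * v (j:ℕ)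
        + (if (j:ℕ) = (i:ℕ) then ((a (i:ℕ) : ℂ) - z) else 0) * v (j:ℕ)
        + (if (j:ℕ) = (i:ℕ) + 1 then (b (i:ℕ) : ℂ) else 0) * v (j:ℕ)) := by
    simp only [Matrix.mulVec, dotProduct, Matrix.sub_apply, Matrix.map_apply,
      Matrix.smul_apply, Matrix.one_apply, jacobiMatrix, Matrix.of_apply, smul_eq_mul]
    refine Finset.sum_congr rfl fun j _ => ?_
    rw [show ((if i = j then (1:ℂ) else 0)) = (if (i:ℕ) = (j:ℕ) then (1:ℂ) else 0) by
      simp [Fin.ext_iff]]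
    split_ifs <;> push_cast <;> (try ring) <;>
      (try (rw [show (i:ℕ)-1 = (j:ℕ) from by omega]; ring)) <;> omega
  rw [hsum, Finset.sum_add_distrib, Finset.sum_add_distrib]
  congr 1
  · congr 1
    · rw [Fin.sum_univ_eq_sum_range (fun k => (if k + 1 = (i:ℕ) then (b ((i:ℕ)-1) : ℂ) else 0) * v k)]
      by_cases h0 : 0 < (i:ℕ)
      · rw [if_pos h0]
        rw [Finset.sum_eq_single ((i:ℕ)-1)]
        · rw [if_pos (by omega)]
        · intro k _ hk; rw [if_neg (by omega), zero_mul]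
        · intro h; exact absurd (Finset.mem_range.mpr (by omega)) h
      · rw [if_neg h0]
        refine Finset.sum_eq_zero fun k _ => ?_
        rw [if_neg (by omega), zero_mul]
    · rw [Fin.sum_univ_eq_sum_range (fun k => (if k = (i:ℕ) then ((a (i:ℕ) : ℂ) - z) else 0) * v k)]
      rw [Finset.sum_eq_single (i:ℕ)]
      · rw [if_pos rfl]
      · intro k _ hk; rw [if_neg hk, zero_mul]
      · intro h; exact absurd (Finset.mem_range.mpr hi) h
  · rw [Fin.sum_univ_eq_sum_range (fun k => (if k = (i:ℕ) + 1 then (b (i:ℕ) : ℂ) else 0) * v k)]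
    by_cases h1 : (i:ℕ) + 1 < p
    · rw [if_pos h1, Finset.sum_eq_single ((i:ℕ)+1)]
      · rw [if_pos rfl]
      · intro k _ hk; rw [if_neg hk, zero_mul]
      · intro h; exact absurd (Finset.mem_range.mpr h1) h
    · rw [if_neg h1]
      refine Finset.sum_eq_zero fun k hk => ?_
      rw [if_neg (by simp at hk; omega), zero_mul]

/-- if `e_p(z) ≠ 0` then `(𝒜₀ - zI)⁻¹(√s₀·δ₀)` equals
`(0, d₁(z), …, d_{p-1}(z))ᵀ - (d_p(z)/e_p(z))·(e₀(z),…,e_{p-1}(z))ᵀ` (note `d₀(z) = 0`);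
in particular, `a₀₀(z) := s₀` times the `(0,0)` entry of `(𝒜₀ - zI)⁻¹` equals
`-d_p(z)/e_p(z)`. -/
theorem jacobi_resolvent_first_column (p : ℕ) (hp : 1 ≤ p) (s₀ : ℝ) (hs₀ : 0 < s₀)
    (a b : ℕ → ℝ) (hb : ∀ k < p, 0 < b k)
    (e d : ℕ → ℂ → ℂ)
    (he0 : ∀ z : ℂ, e 0 z = 1 / (Real.sqrt s₀ : ℂ))
    (he1 : ∀ z : ℂ, e 1 z = (z - (a 0 : ℂ)) / ((b 0 : ℂ) * (Real.sqrt s₀ : ℂ)))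
    (hd0 : ∀ z : ℂ, d 0 z = 0)
    (hd1 : ∀ z : ℂ, d 1 z = (Real.sqrt s₀ : ℂ) / (b 0 : ℂ))
    (hrecE : ∀ k, 1 ≤ k → k ≤ p - 1 → ∀ z : ℂ,
      (b (k - 1) : ℂ) * e (k - 1) z + (a k : ℂ) * e k z + (b k : ℂ) * e (k + 1) z =
        z * e k z)
    (hrecD : ∀ k, 1 ≤ k → k ≤ p - 1 → ∀ z : ℂ,
      (b (k - 1) : ℂ) * d (k - 1) z + (a k : ℂ) * d k z + (b k : ℂ) * d (k + 1) z =
        z * d k z)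
    (z : ℂ) (hz : e p z ≠ 0)
    (M : Matrix (Fin p) (Fin p) ℂ)
    (hM : M = ((jacobiMatrix p a b).map Complex.ofReal) - z • (1 : Matrix (Fin p) (Fin p) ℂ)) :
    (M⁻¹.mulVec ((Real.sqrt s₀ : ℂ) • (Pi.single (⟨0, by omega⟩ : Fin p) 1 : Fin p → ℂ)) =
      fun i : Fin p => d (i : ℕ) z - (d p z / e p z) * e (i : ℕ) z) ∧
    (s₀ : ℂ) * M⁻¹ ⟨0, by omega⟩ ⟨0, by omega⟩ = -(d p z) / e p z := by
  have hs : (Real.sqrt s₀ : ℂ) ≠ 0 := by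
    simp [Complex.ofReal_ne_zero, Real.sqrt_ne_zero', hs₀]
  have hbne : ∀ k < p, (b k : ℂ) ≠ 0 := fun k hk => by
    exact_mod_cast (hb k hk).ne'
  set F : ℕ → ℂ := fun k => d k z - (d p z / e p z) * e k z with hF
  have hFp : F p = 0 := by
    simp only [hF]
    field_simp
    ring
  -- row 0 identity (valid for all p ≥ 1)
  have hrow0 : ((a 0 : ℂ) - z) * F 0 + (b 0 : ℂ) * F 1 = (Real.sqrt s₀ : ℂ) := by
    simp only [hF, hd0, hd1, he0, he1]
    have hb0 : (b 0 : ℂ) ≠ 0 := hbne 0 (by omega)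
    set q := d p z / e p z with hq
    field_simp
    ring

  have hrowk : ∀ i, 1 ≤ i → i ≤ p - 1 →
      (b (i-1) : ℂ) * F (i-1) + ((a i : ℂ) - z) * F i + (b i : ℂ) * F (i+1) = 0 := by
    intro i h1 h2
    have hE := hrecE i h1 h2 z
    have hD := hrecD i h1 h2 z
    simp only [hF]
    linear_combination hD - (d p z / e p z) * hE
  -- the key equation M * F = √s₀ δ₀
  have hMf : M.mulVec (fun j : Fin p => F (j : ℕ)) =
      (Real.sqrt s₀ : ℂ) • (Pi.single (⟨0, by omega⟩ : Fin p) 1 : Fin p → ℂ) := by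
    funext i
    rw [hM, tri_mulVec]
    have hrhs : ((Real.sqrt s₀ : ℂ) • (Pi.single (⟨0, by omega⟩ : Fin p) 1 : Fin p → ℂ)) i =
        if (i : ℕ) = 0 then (Real.sqrt s₀ : ℂ) else 0 := by
      rcases i with ⟨i, hi⟩
      rw [Pi.smul_apply, Pi.single_apply]
      by_cases h : i = 0
      · subst h; rw [if_pos rfl, if_pos rfl]; simp
      · rw [if_neg (by simp [Fin.ext_iff]; omega), if_neg h]; simp
    rw [hrhs]
    rcases i with ⟨i, hi⟩
    simp only [Fin.val_mk]
    by_cases h0 : i = 0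
    · subst h0
      rw [if_pos rfl, if_neg (by omega)]
      by_cases h1 : 1 < p
      · rw [if_pos h1]
        linear_combination hrow0
      · have hp1 : p = 1 := by omega
        rw [if_neg h1]
        have hF1 : F 1 = 0 := by rw [show (1:ℕ) = p from hp1.symm]; exact hFp
        have := hrow0
        rw [hF1] at this
        linear_combination this
    · rw [if_neg h0, if_pos (by omega)]
      have key := hrowk i (by omega) (by omega)
      by_cases h1 : i + 1 < p
      · rw [if_pos h1]; linear_combination key
      · have hip : i + 1 = p := by omega
        rw [if_neg h1]
        have hFi1 : F (i+1) = 0 := by rw [hip]; exact hFp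
        rw [hFi1] at key
        linear_combination key
  -- injectivity of M.mulVec
  have hinj : Function.Injective M.mulVec := by
    intro u v huv
    have h0 : M.mulVec (u - v) = 0 := by
      rw [Matrix.mulVec_sub, huv, sub_self]
    suffices hs' : u - v = 0 by
      funext j; have := congr_fun hs' j; simpa [sub_eq_zero] using this
    set g := u - v with hg
    set G : ℕ → ℂ := fun k => if h : k < p then g ⟨k, h⟩ else 0 with hG
    have hgG : g = fun j : Fin p => G (j : ℕ) := by
      funext j; simp only [hG]; rw [dif_pos j.isLt]
    have hrows : ∀ i : Fin p,
        (if 0 < (i:ℕ) then (b ((i:ℕ)-1) : ℂ) * G ((i:ℕ)-1) else 0)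
          + ((a (i:ℕ) : ℂ) - z) * G (i:ℕ)
          + (if (i:ℕ) + 1 < p then (b (i:ℕ) : ℂ) * G ((i:ℕ)+1) else 0) = 0 := by
      intro i
      have := congr_fun h0 i
      rw [hgG, hM, tri_mulVec] at this
      simpa using this
    set c : ℂ := (Real.sqrt s₀ : ℂ) * G 0 with hc
    have hclaim : ∀ k, k < p → G k = c * e k z := by
      intro k
      induction k using Nat.strong_induction_on with
      | _ k ih =>
        intro hk
        match k with
        | 0 =>
          rw [hc, he0]
          field_simp
        | 1 =>
          have hrow := hrows ⟨0, by omega⟩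
          simp only [Fin.val_mk] at hrow
          rw [if_neg (by omega), if_pos (by omega)] at hrow
          have hb0 : (b 0 : ℂ) ≠ 0 := hbne 0 (by omega)
          rw [hc, he1]
          field_simp
          linear_combination hrow
        | (k+2) =>
          have h1 : k + 1 < p := by omega
          have hrow := hrows ⟨k+1, h1⟩
          simp only [Fin.val_mk] at hrow
          rw [if_pos (by omega), if_pos (by omega)] at hrow
          have hk1 : k + 1 - 1 = k := by omega
          rw [hk1] at hrow
          have hEk := hrecE (k+1) (by omega) (by omega) z
          have hk1' : k + 1 - 1 = k := by omega
          rw [hk1'] at hEk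
          have hGk := ih k (by omega) (by omega)
          have hGk1 := ih (k+1) (by omega) (by omega)
          rw [hGk, hGk1] at hrow
          have hbk : (b (k+1) : ℂ) ≠ 0 := hbne (k+1) (by omega)
          have : (b (k+1) : ℂ) * G (k+2) = (b (k+1) : ℂ) * (c * e (k+2) z) := by
            linear_combination hrow - c * hEk
          exact mul_left_cancel₀ hbk this
    have hc0 : c = 0 := by
      by_cases hp1 : p = 1
      · -- p = 1 : row 0 gives (a0 - z) G 0 = 0 and z ≠ a0
        have hrow := hrows ⟨0, by omega⟩
        simp only [Fin.val_mk] at hrow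
        rw [if_neg (by omega), if_neg (by omega)] at hrow
        have hza : z - (a 0 : ℂ) ≠ 0 := by
          intro h
          apply hz
          rw [hp1, he1, h, zero_div]
        have hG0 : G 0 = 0 := by
          have h' : ((a 0 : ℂ) - z) * G 0 = 0 := by linear_combination hrow
          rcases mul_eq_zero.mp h' with h | h
          · exact absurd (show z - (a 0 : ℂ) = 0 by linear_combination -h) hza
          · exact h
        rw [hc, hG0, mul_zero]
      · -- p ≥ 2 : row p-1
        have h2 : 2 ≤ p := by omega
        have hrow := hrows ⟨p-1, by omega⟩
        simp only [Fin.val_mk] at hrow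
        rw [if_pos (by omega), if_neg (by omega)] at hrow
        have hE := hrecE (p-1) (by omega) (by omega) z
        have hpp : p - 1 + 1 = p := by omega
        rw [hpp] at hE
        have hG1 := hclaim (p-1) (by omega)
        have hG2 := hclaim (p-1-1) (by omega)
        rw [hG1, hG2] at hrow
        have hbp : (b (p-1) : ℂ) ≠ 0 := hbne (p-1) (by omega)
        have : c * ((b (p-1) : ℂ) * e p z) = 0 := by
          linear_combination c * hE - hrow
        rcases mul_eq_zero.mp this with h | h
        · exact h
        · exact absurd (mul_eq_zero.mp h) (by push_neg; exact ⟨hbp, hz⟩)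
    have hGz : ∀ k, k < p → G k = 0 := fun k hk => by
      rw [hclaim k hk, hc0, zero_mul]
    funext j
    have := hGz j j.isLt
    simp only [hG] at this
    rw [dif_pos j.isLt] at this
    simpa using this
  have hunit : IsUnit M := Matrix.mulVec_injective_iff_isUnit.mp hinj
  have hinv : M⁻¹.mulVec ((Real.sqrt s₀ : ℂ) • (Pi.single (⟨0, by omega⟩ : Fin p) 1 : Fin p → ℂ))
      = fun j : Fin p => F (j : ℕ) := by
    rw [← hMf, Matrix.mulVec_mulVec,
      Matrix.nonsing_inv_mul M ((Matrix.isUnit_iff_isUnit_det M).mp hunit), Matrix.one_mulVec]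
  constructor
  · exact hinv
  · have h00 := congr_fun hinv ⟨0, by omega⟩
    rw [Matrix.mulVec_smul, Matrix.mulVec_single] at h00
    simp only [Pi.smul_apply, smul_eq_mul, op_smul_eq_mul, Matrix.col_apply, mul_one, Fin.val_mk] at h00
    rw [hF] at h00
    simp only [hd0, he0] at h00
    have hss : (s₀ : ℂ) = (Real.sqrt s₀ : ℂ) * (Real.sqrt s₀ : ℂ) := by
      rw [← Complex.ofReal_mul, Real.mul_self_sqrt hs₀.le]
    rw [hss]
    field_simp at h00 ⊢
    linear_combination h00
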